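/- arXiv:2605.04843 — 5 statements merged into one kernel-verified Lean document; each statement's English description precedes it below -/
import Mathlib

section
/- Let H be a real Hilbert space, M : H → H a bounded linear, monotone (i.e., (Mu, u)_H ≥ 0), symmetric operator, and u ∈ L²(0,T; H). For 0 ≤ τ ≤ T define the shifted function S(τ)u by (S(τ)u)(t) = 0 for 0 ≤ t ≤ τ and (S(τ)u)(t) = u(t − τ) for τ < t ≤ T. Then ∫₀ᵀ (M u(t−τ), u(t))_H dt ≤ ∫₀ᵀ (M u(t), u(t))_H dt, where the integrand on the left is interpreted as 0 for t ≤ τ. -/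
open MeasureTheory RealInnerProductSpace

lemma amgm_aux {H : Type*} [NormedAddCommGroup H] [InnerProductSpace ℝ H]
    (M : H →L[ℝ] H)
    (hmono : ∀ v : H, 0 ≤ ⟪M v, v⟫)
    (hsymm : ∀ v w : H, ⟪M v, w⟫ = ⟪M w, v⟫) (v w : H) :
    ⟪M v, w⟫ ≤ (⟪M v, v⟫ + ⟪M w, w⟫) / 2 := by
  have h := hmono (v - w)
  have hvw := hsymm v w
  simp only [map_sub, inner_sub_left, inner_sub_right] at h
  nlinarith

/-- For a bounded linear, monotone, symmetric operator `M` on a real Hilbert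
space `H`, `u ∈ L²(0,T;H)`, and `0 ≤ τ ≤ T`, the pairing of the zero-fill
time shift `S(τ)(M∘u)` against `u` is bounded by the pairing of `M∘u` with `u`:
`∫₀ᵀ (M u(t−τ), u(t)) dt ≤ ∫₀ᵀ (M u(t), u(t)) dt`, the left integrand being
zero for `t ≤ τ`. -/
theorem stmt_1 {H : Type*} [NormedAddCommGroup H] [InnerProductSpace ℝ H] [CompleteSpace H]
    (M : H →L[ℝ] H)
    (hmono : ∀ v : H, 0 ≤ ⟪M v, v⟫)
    (hsymm : ∀ v w : H, ⟪M v, w⟫ = ⟪M w, v⟫)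
    (T τ : ℝ) (hτ0 : 0 ≤ τ) (hτT : τ ≤ T)
    (u : ℝ → H)
    (hu : MemLp u 2 (volume.restrict (Set.Ioc 0 T)))
    (hint : IntervalIntegrable (fun t => ⟪M (u t), u t⟫) volume 0 T)
    (hcross : IntervalIntegrable (fun t => ⟪M (u (t - τ)), u t⟫) volume τ T) :
    ∫ t in τ..T, ⟪M (u (t - τ)), u t⟫ ≤ ∫ t in (0:ℝ)..T, ⟪M (u t), u t⟫ := by
  set f : ℝ → ℝ := fun t => ⟪M (u t), u t⟫ with hf
  -- integrability of f on subintervals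
  have hint1 : IntervalIntegrable f volume 0 (T - τ) := by
    apply hint.mono_set
    rw [Set.uIcc_of_le (by linarith), Set.uIcc_of_le (by linarith)]
    exact Set.Icc_subset_Icc le_rfl (by linarith)
  have hint2 : IntervalIntegrable f volume τ T := by
    apply hint.mono_set
    rw [Set.uIcc_of_le (by linarith), Set.uIcc_of_le (by linarith)]
    exact Set.Icc_subset_Icc hτ0 le_rfl
  have hshift : IntervalIntegrable (fun t => f (t - τ)) volume τ T := by
    have := hint1.comp_sub_right τ
    simpa using this
  -- pointwise bound and first inequality
  have h1 : ∫ t in τ..T, ⟪M (u (t - τ)), u t⟫ ≤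
      ∫ t in τ..T, (f (t - τ) + f t) / 2 := by
    apply intervalIntegral.integral_mono_on hτT hcross ((hshift.add hint2).div_const 2)
    intro t _
    exact amgm_aux M hmono hsymm (u (t - τ)) (u t)
  refine h1.trans ?_
  have h2 : ∫ t in τ..T, (f (t - τ) + f t) / 2 =
      (∫ t in (0:ℝ)..(T - τ), f t) / 2 + (∫ t in τ..T, f t) / 2 := by
    rw [intervalIntegral.integral_div, intervalIntegral.integral_add hshift hint2]
    rw [intervalIntegral.integral_comp_sub_right f τ]
    ring_nf
  rw [h2]
  have hsplit1 : (∫ t in (0:ℝ)..(T - τ), f t) + ∫ t in (T - τ)..T, f t =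
      ∫ t in (0:ℝ)..T, f t := by
    apply intervalIntegral.integral_add_adjacent_intervals hint1
    apply hint.mono_set
    rw [Set.uIcc_of_le (by linarith), Set.uIcc_of_le (by linarith)]
    exact Set.Icc_subset_Icc (by linarith) le_rfl
  have hsplit2 : (∫ t in (0:ℝ)..τ, f t) + ∫ t in τ..T, f t =
      ∫ t in (0:ℝ)..T, f t := by
    apply intervalIntegral.integral_add_adjacent_intervals _ hint2
    apply hint.mono_set
    rw [Set.uIcc_of_le hτ0, Set.uIcc_of_le (by linarith)]
    exact Set.Icc_subset_Icc le_rfl (by linarith)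
  have hnn1 : 0 ≤ ∫ t in (T - τ)..T, f t :=
    intervalIntegral.integral_nonneg (by linarith) (fun t _ => hmono (u t))
  have hnn2 : 0 ≤ ∫ t in (0:ℝ)..τ, f t :=
    intervalIntegral.integral_nonneg hτ0 (fun t _ => hmono (u t))
  linarith
end

section
/- Let H be a real Hilbert space, M : H → H a bounded linear, monotone, symmetric operator, u ∈ L²(0,T; H), and suppose the limit z := lim_{τ→0⁺} (1/τ)(I − S(τ))(M∘u) exists in a suitable dual pairing sense against u, where S(τ) is the zero-fill time shift. Then the pairing of this derivative with u is nonnegative: lim_{τ→0⁺} (1/τ)[∫₀ᵀ (Mu(t), u(t))_H dt − ∫_τ^T (Mu(t−τ), u(t))_H dt] ≥ 0. -/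
open MeasureTheory RealInnerProductSpace Filter

/-- For a bounded linear, monotone, symmetric operator `M` on a real Hilbert
space `H` and `u ∈ L²(0,T;H)`, if the difference-quotient pairing
`(1/τ)[∫₀ᵀ (Mu(t),u(t)) dt − ∫_τ^T (Mu(t−τ),u(t)) dt]` converges as `τ → 0⁺`
to some limit `z`, then `z ≥ 0`. -/
theorem stmt_2 {H : Type*} [NormedAddCommGroup H] [InnerProductSpace ℝ H] [CompleteSpace H]
    (M : H →L[ℝ] H)
    (hmono : ∀ v : H, 0 ≤ ⟪M v, v⟫)
    (hsymm : ∀ v w : H, ⟪M v, w⟫ = ⟪M w, v⟫)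
    (T : ℝ) (hT : 0 < T)
    (u : ℝ → H)
    (hu : MemLp u 2 (volume.restrict (Set.Ioc 0 T)))
    (hint : IntervalIntegrable (fun t => ⟪M (u t), u t⟫) volume 0 T)
    (hcross : ∀ τ ∈ Set.Ioc (0:ℝ) T,
      IntervalIntegrable (fun t => ⟪M (u (t - τ)), u t⟫) volume τ T)
    (z : ℝ)
    (hz : Tendsto
      (fun τ : ℝ => (1 / τ) *
        ((∫ t in (0:ℝ)..T, ⟪M (u t), u t⟫) - ∫ t in τ..T, ⟪M (u (t - τ)), u t⟫))
      (nhdsWithin 0 (Set.Ioi 0)) (nhds z)) :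
    0 ≤ z := by
  set f : ℝ → ℝ := fun t => ⟪M (u t), u t⟫ with hf
  have hf0 : ∀ t, 0 ≤ f t := fun t => hmono (u t)
  -- pointwise AM-GM type bound
  have hpt : ∀ v w : H, ⟪M v, w⟫ ≤ (⟪M v, v⟫ + ⟪M w, w⟫) / 2 := by
    intro v w
    have h := hmono (v - w)
    have hexp : ⟪M (v - w), v - w⟫ = ⟪M v, v⟫ - 2 * ⟪M v, w⟫ + ⟪M w, w⟫ := by
      rw [map_sub, inner_sub_left, inner_sub_right, inner_sub_right, hsymm w v]
      ring
    linarith [hexp ▸ h]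
  refine ge_of_tendsto hz ?_
  have hmem : Set.Ioo (0:ℝ) T ∈ nhdsWithin 0 (Set.Ioi 0) :=
    Ioo_mem_nhdsGT_of_mem (Set.left_mem_Ico.2 hT)
  filter_upwards [hmem] with τ hτ
  obtain ⟨hτ0, hτT⟩ := hτ
  have hτT' : τ ≤ T := hτT.le
  have hsub1 : Set.uIcc τ T ⊆ Set.uIcc 0 T := Set.uIcc_subset_uIcc (by
    rw [Set.uIcc_of_le hT.le]; exact ⟨hτ0.le, hτT'⟩) (by
    rw [Set.uIcc_of_le hT.le]; exact ⟨hT.le, le_rfl⟩)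
  have hsub2 : Set.uIcc 0 (T - τ) ⊆ Set.uIcc 0 T := Set.uIcc_subset_uIcc (by
    rw [Set.uIcc_of_le hT.le]; exact ⟨le_rfl, hT.le⟩) (by
    rw [Set.uIcc_of_le hT.le]; constructor <;> linarith)
  have hsub3 : Set.uIcc (T - τ) T ⊆ Set.uIcc 0 T := Set.uIcc_subset_uIcc (by
    rw [Set.uIcc_of_le hT.le]; constructor <;> linarith) (by
    rw [Set.uIcc_of_le hT.le]; exact ⟨hT.le, le_rfl⟩)
  have hsub4 : Set.uIcc 0 τ ⊆ Set.uIcc 0 T := Set.uIcc_subset_uIcc (by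
    rw [Set.uIcc_of_le hT.le]; exact ⟨le_rfl, hT.le⟩) (by
    rw [Set.uIcc_of_le hT.le]; exact ⟨hτ0.le, hτT'⟩)
  have I1 : IntervalIntegrable f volume τ T := hint.mono_set hsub1
  have I2 : IntervalIntegrable f volume 0 (T - τ) := hint.mono_set hsub2
  have I3 : IntervalIntegrable (fun t => f (t - τ)) volume τ T := by
    have := I2.comp_sub_right τ
    simpa using this
  have Icross : IntervalIntegrable (fun t => ⟪M (u (t - τ)), u t⟫) volume τ T :=
    hcross τ ⟨hτ0, hτT'⟩
  -- bound the cross integral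
  have hB : (∫ t in τ..T, ⟪M (u (t - τ)), u t⟫)
      ≤ ∫ t in τ..T, (f (t - τ) + f t) / 2 := by
    apply intervalIntegral.integral_mono_on hτT' Icross ((I3.add I1).div_const 2)
    intro t _
    exact hpt (u (t - τ)) (u t)
  have hshift : (∫ t in τ..T, f (t - τ)) = ∫ t in (0:ℝ)..(T - τ), f t := by
    have := intervalIntegral.integral_comp_sub_right f τ (a := τ) (b := T)
    simpa using this
  have hsplit1 : (∫ t in (0:ℝ)..(T - τ), f t) + (∫ t in (T - τ)..T, f t)
      = ∫ t in (0:ℝ)..T, f t :=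
    intervalIntegral.integral_add_adjacent_intervals I2 (hint.mono_set hsub3)
  have hsplit2 : (∫ t in (0:ℝ)..τ, f t) + (∫ t in τ..T, f t) = ∫ t in (0:ℝ)..T, f t :=
    intervalIntegral.integral_add_adjacent_intervals (hint.mono_set hsub4) I1
  have hnn1 : 0 ≤ ∫ t in (T - τ)..T, f t :=
    intervalIntegral.integral_nonneg (by linarith) (fun t _ => hf0 t)
  have hnn2 : 0 ≤ ∫ t in (0:ℝ)..τ, f t :=
    intervalIntegral.integral_nonneg hτ0.le (fun t _ => hf0 t)
  have havg : (∫ t in τ..T, (f (t - τ) + f t) / 2)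
      = ((∫ t in τ..T, f (t - τ)) + ∫ t in τ..T, f t) / 2 := by
    rw [intervalIntegral.integral_div, intervalIntegral.integral_add I3 I1]
  have hkey : (∫ t in τ..T, ⟪M (u (t - τ)), u t⟫) ≤ ∫ t in (0:ℝ)..T, f t := by
    rw [havg, hshift] at hB
    linarith
  have : 0 ≤ (∫ t in (0:ℝ)..T, f t) - ∫ t in τ..T, ⟪M (u (t - τ)), u t⟫ := by linarith
  positivity
end

section
/- Let H be a real Hilbert space and F₁, F₂ : D ⊆ H → H accretive operators (i.e., (F_i u − F_i v, u − v)_H ≥ 0 for u, v in their domains), and suppose u ∈ D(F₁) ∩ D(F₂) satisfies F₁u + F₂u = 0. Fix s > 0, and suppose the sequences {u₁ⁿ}, {u₂ⁿ} satisfy the Peaceman–Rachford iteration (sI + F₁)u₁^{n+1} = (sI − F₂)u₂ⁿ and (sI + F₂)u₂^{n+1} = (sI − F₁)u₁^{n+1}. Define vⁿ = (sI + F₂)u₂ⁿ, v = (sI + F₂)u, wⁿ = (sI − F₂)u₂ⁿ, w = (sI − F₂)u. Then ‖v^{n+1} − v‖ ≤ ‖wⁿ − w‖ ≤ ‖vⁿ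 − v‖ for all n. -/
open RealInnerProductSpace

open RealInnerProductSpace in
lemma pr_key {H : Type*} [NormedAddCommGroup H] [InnerProductSpace ℝ H]
    (s : ℝ) (hs : 0 < s) (x y a b : H) (h : 0 ≤ ⟪a - b, x - y⟫) :
    ‖(s • x - a) - (s • y - b)‖ ≤ ‖(s • x + a) - (s • y + b)‖ := by
  have hA : (s • x - a) - (s • y - b) = s • (x - y) - (a - b) := by
    simp [smul_sub]; abel
  have hB : (s • x + a) - (s • y + b) = s • (x - y) + (a - b) := by
    simp [smul_sub]; abel
  rw [hA, hB]
  have hsq : ‖s • (x - y) - (a - b)‖ ^ 2 ≤ ‖s • (x - y) + (a - b)‖ ^ 2 := by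
    rw [norm_sub_sq_real, norm_add_sq_real]
    have : 0 ≤ ⟪s • (x - y), a - b⟫ := by
      rw [real_inner_smul_left]
      have := real_inner_comm (a - b) (x - y)
      nlinarith
    nlinarith
  nlinarith [norm_nonneg (s • (x - y) - (a - b)), norm_nonneg (s • (x - y) + (a - b))]

/-- Peaceman–Rachford contraction estimates: with `F₁, F₂` accretive,
`F₁u + F₂u = 0`, and iterates satisfying the resolvent recursions, the
quantities `vⁿ = (sI+F₂)u₂ⁿ`, `wⁿ = (sI−F₂)u₂ⁿ` satisfy
`‖v^{n+1} − v‖ ≤ ‖wⁿ − w‖ ≤ ‖vⁿ − v‖`. -/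
theorem stmt_3 {H : Type*} [NormedAddCommGroup H] [InnerProductSpace ℝ H] [CompleteSpace H]
    (D₁ D₂ : Set H) (F₁ F₂ : H → H)
    (hacc₁ : ∀ x ∈ D₁, ∀ y ∈ D₁, 0 ≤ ⟪F₁ x - F₁ y, x - y⟫)
    (hacc₂ : ∀ x ∈ D₂, ∀ y ∈ D₂, 0 ≤ ⟪F₂ x - F₂ y, x - y⟫)
    (u : H) (hu₁ : u ∈ D₁) (hu₂ : u ∈ D₂) (hsol : F₁ u + F₂ u = 0)
    (s : ℝ) (hs : 0 < s)
    (u₁ u₂ : ℕ → H)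
    (hmem₁ : ∀ n, u₁ (n + 1) ∈ D₁) (hmem₂ : ∀ n, u₂ n ∈ D₂)
    (hiter₁ : ∀ n, s • u₁ (n + 1) + F₁ (u₁ (n + 1)) = s • u₂ n - F₂ (u₂ n))
    (hiter₂ : ∀ n, s • u₂ (n + 1) + F₂ (u₂ (n + 1)) = s • u₁ (n + 1) - F₁ (u₁ (n + 1))) :
    ∀ n,
      ‖(s • u₂ (n + 1) + F₂ (u₂ (n + 1))) - (s • u + F₂ u)‖ ≤
        ‖(s • u₂ n - F₂ (u₂ n)) - (s • u - F₂ u)‖ ∧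
      ‖(s • u₂ n - F₂ (u₂ n)) - (s • u - F₂ u)‖ ≤
        ‖(s • u₂ n + F₂ (u₂ n)) - (s • u + F₂ u)‖ := by
  intro n
  have hF2u : F₂ u = -F₁ u := by
    exact eq_neg_of_add_eq_zero_right hsol
  constructor
  · rw [hiter₂ n]
    have e1 : s • u - F₂ u = s • u + F₁ u := by rw [hF2u]; abel
    have e2 : s • u + F₂ u = s • u - F₁ u := by rw [hF2u]; abel
    rw [e2]
    calc ‖(s • u₁ (n+1) - F₁ (u₁ (n+1))) - (s • u - F₁ u)‖
        ≤ ‖(s • u₁ (n+1) + F₁ (u₁ (n+1))) - (s • u + F₁ u)‖ :=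
          pr_key s hs _ _ _ _ (hacc₁ _ (hmem₁ n) _ hu₁)
      _ = ‖(s • u₂ n - F₂ (u₂ n)) - (s • u - F₂ u)‖ := by rw [hiter₁ n, e1]
  · exact pr_key s hs _ _ _ _ (hacc₂ _ (hmem₂ n) _ hu₂)
end

section
/- Under the hypotheses of the Peaceman–Rachford setup (F₁, F₂ accretive on a Hilbert space H, F₁u + F₂u = 0, iterates satisfying (sI + F₁)u₁^{n+1} = (sI − F₂)u₂ⁿ and (sI + F₂)u₂^{n+1} = (sI − F₁)u₁^{n+1}), suppose additionally that F_ℓ is k_ℓ-monotone: (F_ℓ x − F_ℓ y, x − y)_H ≥ k_ℓ(x − y) with k_ℓ ≥ 0. Then k₁(u₁ⁿ − u) + k₂(u₂ⁿ − u) → 0 as n → ∞. -/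
open RealInnerProductSpace Filter

/-- Peaceman–Rachford convergence: if additionally each `F_ℓ` is `k_ℓ`-monotone
with `k_ℓ ≥ 0`, then `k₁(u₁ⁿ − u) + k₂(u₂ⁿ − u) → 0` as `n → ∞`. -/
theorem stmt_4 {H : Type*} [NormedAddCommGroup H] [InnerProductSpace ℝ H] [CompleteSpace H]
    (D₁ D₂ : Set H) (F₁ F₂ : H → H) (k₁ k₂ : H → ℝ)
    (hk₁ : ∀ v, 0 ≤ k₁ v) (hk₂ : ∀ v, 0 ≤ k₂ v)
    (hmon₁ : ∀ x ∈ D₁, ∀ y ∈ D₁, k₁ (x - y) ≤ ⟪F₁ x - F₁ y, x - y⟫)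
    (hmon₂ : ∀ x ∈ D₂, ∀ y ∈ D₂, k₂ (x - y) ≤ ⟪F₂ x - F₂ y, x - y⟫)
    (u : H) (hu₁ : u ∈ D₁) (hu₂ : u ∈ D₂) (hsol : F₁ u + F₂ u = 0)
    (s : ℝ) (hs : 0 < s)
    (u₁ u₂ : ℕ → H)
    (hmem₁ : ∀ n, u₁ (n + 1) ∈ D₁) (hmem₂ : ∀ n, u₂ n ∈ D₂)
    (hiter₁ : ∀ n, s • u₁ (n + 1) + F₁ (u₁ (n + 1)) = s • u₂ n - F₂ (u₂ n))
    (hiter₂ : ∀ n, s • u₂ (n + 1) + F₂ (u₂ (n + 1)) = s • u₁ (n + 1) - F₁ (u₁ (n + 1))) :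
    Tendsto (fun n => k₁ (u₁ n - u) + k₂ (u₂ n - u)) atTop (nhds 0) := by
  have hF₁u : F₁ u = -F₂ u := eq_neg_of_add_eq_zero_left hsol
  set e : ℕ → ℝ := fun n => ‖s • (u₂ n - u) - (F₂ (u₂ n) - F₂ u)‖ ^ 2 with he
  set b : ℕ → ℝ := fun n => k₁ (u₁ (n + 1) - u) + k₂ (u₂ (n + 1) - u) with hb
  have hsq : ∀ p q : H, ‖p - q‖ ^ 2 = ‖p + q‖ ^ 2 - 4 * ⟪p, q⟫ := by
    intro p q
    have h1 := @norm_add_sq_real H _ _ p q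
    have h2 := @norm_sub_sq_real H _ _ p q
    linarith
  have key : ∀ n, e (n + 1) + (4 * s) * b n ≤ e n := by
    intro n
    have h1 : F₁ (u₁ (n + 1)) = s • u₂ n - F₂ (u₂ n) - s • u₁ (n + 1) := by
      rw [← hiter₁ n]; abel
    have h2 : F₂ (u₂ (n + 1)) = s • u₁ (n + 1) - F₁ (u₁ (n + 1)) - s • u₂ (n + 1) := by
      rw [← hiter₂ n]; abel
    -- A n = B n
    have hAB : s • (u₂ n - u) - (F₂ (u₂ n) - F₂ u)
        = s • (u₁ (n + 1) - u) + (F₁ (u₁ (n + 1)) - F₁ u) := by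
      rw [h1, hF₁u]; module
    -- C n = B' n
    have hCB : s • (u₂ (n + 1) - u) + (F₂ (u₂ (n + 1)) - F₂ u)
        = s • (u₁ (n + 1) - u) - (F₁ (u₁ (n + 1)) - F₁ u) := by
      rw [h2, hF₁u]; module
    have step1 : ‖s • (u₁ (n + 1) - u) - (F₁ (u₁ (n + 1)) - F₁ u)‖ ^ 2
        = e n - 4 * (s * ⟪F₁ (u₁ (n + 1)) - F₁ u, u₁ (n + 1) - u⟫) := by
      rw [hsq, he]
      simp only [← hAB]
      rw [real_inner_smul_left, real_inner_comm]
    have step2 : e (n + 1)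
        = ‖s • (u₂ (n + 1) - u) + (F₂ (u₂ (n + 1)) - F₂ u)‖ ^ 2
          - 4 * (s * ⟪F₂ (u₂ (n + 1)) - F₂ u, u₂ (n + 1) - u⟫) := by
      show ‖s • (u₂ (n + 1) - u) - (F₂ (u₂ (n + 1)) - F₂ u)‖ ^ 2 = _
      rw [hsq, real_inner_smul_left, real_inner_comm]
    have m1 := hmon₁ (u₁ (n + 1)) (hmem₁ n) u hu₁
    have m2 := hmon₂ (u₂ (n + 1)) (hmem₂ (n + 1)) u hu₂
    rw [step2, hCB, step1]
    have hs4 : (0:ℝ) < 4 * s := by linarith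
    simp only [hb]
    nlinarith [mul_le_mul_of_nonneg_left m1 (le_of_lt hs),
      mul_le_mul_of_nonneg_left m2 (le_of_lt hs)]
  have hb0 : ∀ n, 0 ≤ b n := fun n => add_nonneg (hk₁ _) (hk₂ _)
  have he0 : ∀ n, 0 ≤ e n := fun n => sq_nonneg _
  have htel : ∀ n, e n + (4 * s) * (∑ i ∈ Finset.range n, b i) ≤ e 0 := by
    intro n
    induction n with
    | zero => simp
    | succ n ih =>
      rw [Finset.sum_range_succ]
      have := key n
      nlinarith
  have hs4 : (0:ℝ) < 4 * s := by linarith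
  have hsummable : Summable b := by
    apply summable_of_sum_range_le (c := e 0 / (4 * s)) hb0
    intro n
    rw [le_div_iff₀ hs4]
    nlinarith [htel n, he0 n]
  have hbt : Tendsto b atTop (nhds 0) := hsummable.tendsto_atTop_zero
  rw [← tendsto_add_atTop_iff_nat 1]
  exact hbt
end

section
/- Let H be a real Hilbert space and F_ℓ : D(F_ℓ) ⊆ H → H, ℓ = 1,…,q, operators that are k_ℓ-monotone with k_ℓ(v) ≥ c‖v‖²_H for some c > 0. Let u satisfy Σ_ℓ F_ℓ u = 0 with u ∈ ∩_ℓ D(F_ℓ) and F_ℓ u ∈ H. For s > 0 define the additive splitting iteration: (sI + F_ℓ)u_ℓ^{n+1} = s uⁿ for each ℓ, and u^{n+1} = (1/q) Σ_ℓ u_ℓ^{n+1}. Then s(s + 2c)‖u^{n+1} − u‖² − s²‖uⁿ − u‖² ≤ (1/q) Σ_ℓ ‖F_ℓ u‖²_H for every n. -/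
open RealInnerProductSpace Finset

/-- One-step estimate for the additive splitting scheme: with each `F_ℓ`
strongly monotone, `Σ_ℓ F_ℓ u = 0`, and the iterates
`(sI + F_ℓ)u_ℓ^{n+1} = s uⁿ`, `u^{n+1} = (1/q)Σ_ℓ u_ℓ^{n+1}`, one has
`s(s+2c)‖u^{n+1} − u‖² − s²‖uⁿ − u‖² ≤ (1/q)Σ_ℓ ‖F_ℓ u‖²`. -/
theorem stmt_7 {H : Type*} [NormedAddCommGroup H] [InnerProductSpace ℝ H] [CompleteSpace H]
    (q : ℕ) (hq : 0 < q)
    (D : Fin q → Set H) (F : Fin q → H → H) (c : ℝ) (hc : 0 < c)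
    (hmon : ∀ ℓ, ∀ x ∈ D ℓ, ∀ y ∈ D ℓ,
      c * ‖x - y‖ ^ 2 ≤ ⟪F ℓ x - F ℓ y, x - y⟫)
    (u : H) (hu : ∀ ℓ, u ∈ D ℓ) (hsol : ∑ ℓ : Fin q, F ℓ u = 0)
    (s : ℝ) (hs : 0 < s)
    (uL : ℕ → Fin q → H) (uN : ℕ → H)
    (hmem : ∀ n ℓ, uL (n + 1) ℓ ∈ D ℓ)
    (hiter : ∀ n ℓ, s • uL (n + 1) ℓ + F ℓ (uL (n + 1) ℓ) = s • uN n)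
    (havg : ∀ n, uN (n + 1) = (q : ℝ)⁻¹ • ∑ ℓ : Fin q, uL (n + 1) ℓ) :
    ∀ n, s * (s + 2 * c) * ‖uN (n + 1) - u‖ ^ 2 - s ^ 2 * ‖uN n - u‖ ^ 2 ≤
      (q : ℝ)⁻¹ * ∑ ℓ : Fin q, ‖F ℓ u‖ ^ 2 := by
  intro n
  set vN : H := uN n - u with hvN
  have hqR : (0:ℝ) < (q:ℝ) := by exact_mod_cast hq
  -- per-ℓ estimate
  have key : ∀ ℓ : Fin q,
      s * (s + 2 * c) * ‖uL (n+1) ℓ - u‖ ^ 2 + 2 * s * ⟪F ℓ u, vN⟫ ≤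
        s ^ 2 * ‖vN‖ ^ 2 + ‖F ℓ u‖ ^ 2 := by
    intro ℓ
    set v : H := uL (n+1) ℓ - u with hv
    have hmono := hmon ℓ (uL (n+1) ℓ) (hmem n ℓ) u (hu ℓ)
    have hF : F ℓ (uL (n+1) ℓ) - F ℓ u = s • (vN - v) - F ℓ u := by
      have := hiter n ℓ
      have : F ℓ (uL (n+1) ℓ) = s • uN n - s • uL (n+1) ℓ := by
        rw [← this]; abel
      rw [this, hv, hvN]; module
    have hineq : c * ‖v‖ ^ 2 ≤ s * ⟪vN - v, v⟫ - ⟪F ℓ u, v⟫ := by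
      calc c * ‖v‖ ^ 2 ≤ ⟪F ℓ (uL (n+1) ℓ) - F ℓ u, v⟫ := hmono
        _ = s * ⟪vN - v, v⟫ - ⟪F ℓ u, v⟫ := by
            rw [hF, inner_sub_left, real_inner_smul_left]
    -- expand inner products in terms of norms
    have hpol : 2 * ⟪vN, v⟫ = ‖vN‖ ^ 2 + ‖v‖ ^ 2 - ‖vN - v‖ ^ 2 := by
      have := norm_sub_sq_real vN v
      linarith [this]
    have hyoung : -2 * s * ⟪F ℓ u, v - vN⟫ ≤ ‖F ℓ u‖ ^ 2 + s ^ 2 * ‖v - vN‖ ^ 2 := by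
      have h1 : -⟪F ℓ u, v - vN⟫ ≤ ‖F ℓ u‖ * ‖v - vN‖ := by
        have := abs_real_inner_le_norm (F ℓ u) (v - vN)
        have := neg_abs_le ⟪F ℓ u, v - vN⟫
        linarith
      have h2 : 2 * (s * (‖F ℓ u‖ * ‖v - vN‖)) ≤ ‖F ℓ u‖ ^ 2 + s ^ 2 * ‖v - vN‖ ^ 2 := by
        nlinarith [sq_nonneg (‖F ℓ u‖ - s * ‖v - vN‖)]
      nlinarith [mul_le_mul_of_nonneg_left h1 (le_of_lt hs)]
    have hsplit : ⟪F ℓ u, v⟫ = ⟪F ℓ u, v - vN⟫ + ⟪F ℓ u, vN⟫ := by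
      rw [← inner_add_right]; congr 1; abel
    have hnn : ‖v - vN‖ ^ 2 = ‖vN - v‖ ^ 2 := by rw [norm_sub_rev]
    have hinner_vv : ⟪vN - v, v⟫ = ⟪vN, v⟫ - ‖v‖ ^ 2 := by
      rw [inner_sub_left, real_inner_self_eq_norm_sq]
    nlinarith [hineq, hpol, hyoung, mul_le_mul_of_nonneg_left hineq (by linarith : (0:ℝ) ≤ 2*s)]
  -- sum over ℓ
  have hsum : s * (s + 2 * c) * ∑ ℓ : Fin q, ‖uL (n+1) ℓ - u‖ ^ 2 ≤
      (q:ℝ) * (s ^ 2 * ‖vN‖ ^ 2) + ∑ ℓ : Fin q, ‖F ℓ u‖ ^ 2 := by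
    have h1 := Finset.sum_le_sum (s := (Finset.univ : Finset (Fin q))) (fun ℓ _ => key ℓ)
    have h2 : ∑ ℓ : Fin q, ⟪F ℓ u, vN⟫ = 0 := by
      rw [← sum_inner, hsol, inner_zero_left]
    rw [Finset.sum_add_distrib, Finset.sum_add_distrib, ← Finset.mul_sum, ← Finset.mul_sum,
      h2, mul_zero, add_zero, Finset.sum_const, Finset.card_univ, Fintype.card_fin,
      nsmul_eq_mul] at h1
    linarith
  -- convexity of the squared norm of the average
  have hconv : ‖uN (n+1) - u‖ ^ 2 ≤ (q:ℝ)⁻¹ * ∑ ℓ : Fin q, ‖uL (n+1) ℓ - u‖ ^ 2 := by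
    have hrep : uN (n+1) - u = (q:ℝ)⁻¹ • ∑ ℓ : Fin q, (uL (n+1) ℓ - u) := by
      rw [havg n, Finset.sum_sub_distrib, smul_sub, Finset.sum_const, Finset.card_univ,
        Fintype.card_fin, ← Nat.cast_smul_eq_nsmul ℝ, smul_smul,
        inv_mul_cancel₀ (ne_of_gt hqR), one_smul]
    rw [hrep]
    have h1 : ‖∑ ℓ : Fin q, (uL (n+1) ℓ - u)‖ ≤ ∑ ℓ : Fin q, ‖uL (n+1) ℓ - u‖ :=
      norm_sum_le _ _
    have h2 : (∑ ℓ : Fin q, ‖uL (n+1) ℓ - u‖) ^ 2 ≤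
        (q:ℝ) * ∑ ℓ : Fin q, ‖uL (n+1) ℓ - u‖ ^ 2 := by
      have := sq_sum_le_card_mul_sum_sq (s := (Finset.univ : Finset (Fin q)))
        (f := fun ℓ => ‖uL (n+1) ℓ - u‖)
      simpa [Finset.card_univ] using this
    rw [norm_smul]
    have : (‖(q:ℝ)⁻¹‖ * ‖∑ ℓ : Fin q, (uL (n+1) ℓ - u)‖) ^ 2
        = (q:ℝ)⁻¹ ^ 2 * ‖∑ ℓ : Fin q, (uL (n+1) ℓ - u)‖ ^ 2 := by
      rw [mul_pow, Real.norm_eq_abs, sq_abs]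
    rw [this]
    have h3 : ‖∑ ℓ : Fin q, (uL (n+1) ℓ - u)‖ ^ 2 ≤
        (q:ℝ) * ∑ ℓ : Fin q, ‖uL (n+1) ℓ - u‖ ^ 2 :=
      le_trans (pow_le_pow_left₀ (norm_nonneg _) h1 2) h2
    calc (q:ℝ)⁻¹ ^ 2 * ‖∑ ℓ : Fin q, (uL (n+1) ℓ - u)‖ ^ 2
        ≤ (q:ℝ)⁻¹ ^ 2 * ((q:ℝ) * ∑ ℓ : Fin q, ‖uL (n+1) ℓ - u‖ ^ 2) := by
          exact mul_le_mul_of_nonneg_left h3 (by positivity)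
      _ = (q:ℝ)⁻¹ * ∑ ℓ : Fin q, ‖uL (n+1) ℓ - u‖ ^ 2 := by
          field_simp
  have hcoef : (0:ℝ) ≤ s * (s + 2 * c) := by positivity
  have := mul_le_mul_of_nonneg_left hconv hcoef
  have hq' : (q:ℝ)⁻¹ * ((q:ℝ) * (s ^ 2 * ‖vN‖ ^ 2)) = s ^ 2 * ‖vN‖ ^ 2 := by
    field_simp
  nlinarith [mul_le_mul_of_nonneg_left hsum (by positivity : (0:ℝ) ≤ (q:ℝ)⁻¹), hq']
end
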